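/- Let G be a finite simple graph with maximum vertex degree at most z (z ≥ 1 an integer) and let S be a nonempty subset of its vertices. For an integer s ≥ |S|, let M_z(s, S) denote the number of vertex subsets T with |T| = s and S ⊆ T such that every connected component of the induced subgraph G[T] contains at least one vertex of S. Then M_z(s, S) ≤ e^{|S|−1} · (z·e)^{s−|S|}, where e is Euler's number. -/

import Mathlib

set_option linter.unusedSectionVars false
set_option linter.unnecessarySimpa false

open scoped Classical

namespace GottesmanCluster

variable {V : Type*} [Fintype V] [DecidableEq V]

noncomputable def nl (G : SimpleGraph V) (u : V) : List V :=
  (Set.toFinite (G.neighborSet u)).toFinset.toList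

lemma mem_nl {G : SimpleGraph V} {u w : V} : w ∈ nl G u ↔ G.Adj u w := by
  simp [nl]

lemma length_nl {G : SimpleGraph V} (u : V) :
    (nl G u).length = (G.neighborSet u).ncard := by
  rw [nl, Finset.length_toList, Set.ncard_eq_toFinset_card]

noncomputable def lab (G : SimpleGraph V) (u w : V) : ℕ := (nl G u).idxOf w

noncomputable def ninv (G : SimpleGraph V) (v₀ u : V) (i : ℕ) : V := (nl G u).getD i v₀

lemma lab_lt {G : SimpleGraph V} {u w : V} (h : G.Adj u w) {z : ℕ}
    (hdeg : (G.neighborSet u).ncard ≤ z) : lab G u w < z := by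
  have h1 : lab G u w < (nl G u).length := List.idxOf_lt_length_iff.2 (mem_nl.2 h)
  rw [length_nl] at h1
  exact h1.trans_le hdeg

lemma ninv_lab {G : SimpleGraph V} (v₀ : V) {u w : V} (h : G.Adj u w) :
    ninv G v₀ u (lab G u w) = w := by
  have hlt : lab G u w < (nl G u).length := List.idxOf_lt_length_iff.2 (mem_nl.2 h)
  rw [ninv, List.getD_eq_getElem (hn := hlt)]
  exact List.getElem_idxOf hlt

section Layers

variable (G : SimpleGraph V) (S T : Finset V) (v₀ : V)

noncomputable def layer : ℕ → Finset V
  | 0 => S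
  | k+1 => layer k ∪ T.filter fun v => ∃ u ∈ layer k, G.Adj u v

variable {G S T}

lemma layer_mono {k l : ℕ} (h : k ≤ l) : layer G S T k ⊆ layer G S T l := by
  induction l with
  | zero => simpa [Nat.le_zero.1 h] using Finset.Subset.refl _
  | succ n ih =>
    rcases Nat.lt_or_ge k (n+1) with h'|h'
    · exact (ih (Nat.lt_succ_iff.1 h')).trans (Finset.subset_union_left)
    · have : k = n + 1 := le_antisymm h h'
      subst this; exact Finset.Subset.refl _

lemma layer_subset (hST : S ⊆ T) (k : ℕ) : layer G S T k ⊆ T := by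
  induction k with
  | zero => exact hST
  | succ n ih =>
    intro v hv
    rcases Finset.mem_union.1 hv with h|h
    · exact ih h
    · exact (Finset.mem_filter.1 h).1

variable (G S T)

noncomputable def depth (v : V) : ℕ :=
  if h : ∃ k, v ∈ layer G S T k then Nat.find h else 0

lemma mem_layer_depth {v : V} (h : ∃ k, v ∈ layer G S T k) :
    v ∈ layer G S T (depth G S T v) := by
  rw [depth, dif_pos h]; exact Nat.find_spec h

lemma depth_le {v : V} {k : ℕ} (h : v ∈ layer G S T k) : depth G S T v ≤ k := by
  rw [depth, dif_pos ⟨k, h⟩]; exact Nat.find_le h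

lemma depth_eq_zero_of_mem {v : V} (hv : v ∈ S) : depth G S T v = 0 :=
  Nat.le_zero.1 (depth_le G S T (show v ∈ layer G S T 0 from hv))

lemma mem_S_of_depth_eq_zero {v : V} (hex : ∃ k, v ∈ layer G S T k)
    (h : depth G S T v = 0) : v ∈ S := by
  have := mem_layer_depth G S T hex
  rwa [h] at this


noncomputable def parent (v : V) : V :=
  if h : ((layer G S T (depth G S T v - 1)).filter fun u => G.Adj u v).Nonempty
  then h.choose else v₀

lemma parent_spec {v : V} (hv : v ∈ T) (hex : ∃ k, v ∈ layer G S T k)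
    (hd : depth G S T v ≠ 0) :
    parent G S T v₀ v ∈ layer G S T (depth G S T v - 1) ∧ G.Adj (parent G S T v₀ v) v := by
  obtain ⟨k, hk⟩ := Nat.exists_eq_succ_of_ne_zero hd
  have hvl := mem_layer_depth G S T hex
  rw [hk] at hvl
  have hnot : v ∉ layer G S T k := fun h => by
    have := depth_le G S T h; omega
  have hmem : v ∈ T.filter fun w => ∃ u ∈ layer G S T k, G.Adj u w := by
    rcases Finset.mem_union.1 hvl with h|h
    · exact absurd h hnot
    · exact h
  obtain ⟨u, hu, hadj⟩ := (Finset.mem_filter.1 hmem).2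
  have hne : ((layer G S T (depth G S T v - 1)).filter fun u => G.Adj u v).Nonempty := by
    refine ⟨u, Finset.mem_filter.2 ⟨?_, hadj⟩⟩
    rw [hk]; simpa using hu
  rw [parent, dif_pos hne]
  have h2 := hne.choose_spec
  exact ⟨(Finset.mem_filter.1 h2).1, (Finset.mem_filter.1 h2).2⟩

lemma depth_parent {v : V} (hv : v ∈ T) (hex : ∃ k, v ∈ layer G S T k)
    (hd : depth G S T v ≠ 0) :
    depth G S T (parent G S T v₀ v) = depth G S T v - 1 := by
  obtain ⟨hmem, hadj⟩ := parent_spec G S T v₀ hv hex hd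
  have hle : depth G S T (parent G S T v₀ v) ≤ depth G S T v - 1 := depth_le G S T hmem
  have hpj : parent G S T v₀ v ∈ layer G S T (depth G S T (parent G S T v₀ v)) :=
    mem_layer_depth G S T ⟨_, hmem⟩
  have hvj : v ∈ layer G S T (depth G S T (parent G S T v₀ v) + 1) :=
    Finset.mem_union.2 (Or.inr (Finset.mem_filter.2 ⟨hv, ⟨_, hpj, hadj⟩⟩))
  have := depth_le G S T hvj
  omega

lemma parent_mem_T {v : V} (hST : S ⊆ T) (hv : v ∈ T) (hex : ∃ k, v ∈ layer G S T k)
    (hd : depth G S T v ≠ 0) : parent G S T v₀ v ∈ T :=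
  layer_subset hST _ (parent_spec G S T v₀ hv hex hd).1

lemma parent_exists_layer {v : V} (hv : v ∈ T) (hex : ∃ k, v ∈ layer G S T k)
    (hd : depth G S T v ≠ 0) : ∃ k, parent G S T v₀ v ∈ layer G S T k :=
  ⟨_, (parent_spec G S T v₀ hv hex hd).1⟩

noncomputable def enAux (Bb : ℕ) : ℕ → V → ℕ
  | 0, v => S.toList.idxOf v + 1
  | k+1, v => enAux Bb k (parent G S T v₀ v) * Bb + (lab G (parent G S T v₀ v) v + 1)

noncomputable def en (Bb : ℕ) (v : V) : ℕ := enAux G S T v₀ Bb (depth G S T v) v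

lemma en_root {Bb : ℕ} {v : V} (h : depth G S T v = 0) :
    en G S T v₀ Bb v = S.toList.idxOf v + 1 := by
  rw [en, h]; rfl

lemma one_le_enAux {Bb : ℕ} (k : ℕ) (v : V) : 1 ≤ enAux G S T v₀ Bb k v := by
  cases k <;> simp [enAux] <;> omega

lemma one_le_en {Bb : ℕ} (v : V) : 1 ≤ en G S T v₀ Bb v := one_le_enAux G S T v₀ _ _

lemma en_step {Bb : ℕ} {v : V} (hv : v ∈ T) (hex : ∃ k, v ∈ layer G S T k)
    (hd : depth G S T v ≠ 0) :
    en G S T v₀ Bb v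
      = en G S T v₀ Bb (parent G S T v₀ v) * Bb + (lab G (parent G S T v₀ v) v + 1) := by
  obtain ⟨k, hk⟩ := Nat.exists_eq_succ_of_ne_zero hd
  have hp : depth G S T (parent G S T v₀ v) = k := by
    rw [depth_parent G S T v₀ hv hex hd, hk]; omega
  rw [en, hk, en, hp]
  rfl

lemma Bb_le_en {Bb : ℕ} {v : V} (hv : v ∈ T) (hex : ∃ k, v ∈ layer G S T k)
    (hd : depth G S T v ≠ 0) : Bb ≤ en G S T v₀ Bb v := by
  rw [en_step G S T v₀ hv hex hd]
  have h1 := one_le_en G S T v₀ (Bb := Bb) (parent G S T v₀ v)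
  nlinarith [Nat.zero_le (lab G (parent G S T v₀ v) v)]

noncomputable def dec (Bb : ℕ) : ℕ → V
  | nn =>
    if h : Bb ≤ 1 ∨ nn < Bb then S.toList.getD (nn - 1) v₀
    else ninv G v₀ (dec Bb (nn / Bb)) (nn % Bb - 1)
  termination_by nn => nn
  decreasing_by
    push_neg at h
    exact Nat.div_lt_self (by omega) (by omega)

lemma dec_en {Bb : ℕ} (hST : S ⊆ T) (hBb : 2 ≤ Bb) (hBr : S.card < Bb)
    (hlab : ∀ u w : V, G.Adj u w → lab G u w + 1 < Bb) :
    ∀ k (v : V), v ∈ T → (∃ k', v ∈ layer G S T k') → depth G S T v = k →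
      dec G S v₀ Bb (en G S T v₀ Bb v) = v := by
  intro k
  induction k with
  | zero =>
    intro v hv hex hk
    have hvS : v ∈ S := mem_S_of_depth_eq_zero G S T hex hk
    have hidx : S.toList.idxOf v < S.toList.length :=
      List.idxOf_lt_length_iff.2 (Finset.mem_toList.2 hvS)
    have hlen : S.toList.length = S.card := Finset.length_toList S
    have hen : en G S T v₀ Bb v = S.toList.idxOf v + 1 := en_root G S T v₀ hk
    rw [hen, dec, dif_pos (Or.inr (by omega))]
    simp only [Nat.add_sub_cancel]
    rw [List.getD_eq_getElem (hn := hidx)]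
    exact List.getElem_idxOf hidx
  | succ k ih =>
    intro v hv hex hk
    have hd : depth G S T v ≠ 0 := by omega
    obtain ⟨hpl, hadj⟩ := parent_spec G S T v₀ hv hex hd
    have hpT : parent G S T v₀ v ∈ T := layer_subset hST _ hpl
    have hpex : ∃ k', parent G S T v₀ v ∈ layer G S T k' := ⟨_, hpl⟩
    have hpd : depth G S T (parent G S T v₀ v) = k := by
      rw [depth_parent G S T v₀ hv hex hd, hk]; omega
    have hstep := en_step G S T v₀ (Bb := Bb) hv hex hd
    set p := parent G S T v₀ v with hp
    set c := lab G p v + 1 with hc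
    have hclt : c < Bb := hlab _ _ hadj
    have hform : en G S T v₀ Bb v = Bb * en G S T v₀ Bb p + c := by
      rw [hstep]; ring
    have hge : Bb ≤ en G S T v₀ Bb v := Bb_le_en G S T v₀ hv hex hd
    rw [dec, dif_neg (by omega)]
    have hdiv : en G S T v₀ Bb v / Bb = en G S T v₀ Bb p := by
      rw [hform, Nat.mul_add_div (by omega), Nat.div_eq_of_lt hclt, Nat.add_zero]
    have hmod : en G S T v₀ Bb v % Bb = c := by
      rw [hform, Nat.mul_add_mod, Nat.mod_eq_of_lt hclt]
    rw [hdiv, hmod, ih p hpT hpex hpd, hc, Nat.add_sub_cancel]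
    exact ninv_lab v₀ hadj


lemma mem_layer_of_walk (hST : S ⊆ T) {a b : (T : Set V)}
    (w : (G.induce (T : Set V)).Walk a b) (hb : (b : V) ∈ S) :
    (a : V) ∈ layer G S T w.length := by
  induction w with
  | nil => exact hb
  | @cons x y c hadj p ih =>
    have hyx : G.Adj (y : V) (x : V) := by
      have : G.Adj (x : V) (y : V) := hadj
      exact this.symm
    rw [SimpleGraph.Walk.length_cons]
    exact Finset.mem_union.2 (Or.inr (Finset.mem_filter.2
      ⟨Finset.mem_coe.1 x.2, ⟨(y : V), ih hb, hyx⟩⟩))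

lemma exists_layer_of_conn (hST : S ⊆ T)
    (hconn : ∀ v, ∀ hv : v ∈ T, ∃ u, ∃ hu : u ∈ T, u ∈ S ∧
      (G.induce (T : Set V)).Reachable
        ⟨v, Finset.mem_coe.mpr hv⟩ ⟨u, Finset.mem_coe.mpr hu⟩) :
    ∀ v ∈ T, ∃ k, v ∈ layer G S T k := by
  intro v hv
  obtain ⟨u, hu, huS, hreach⟩ := hconn v hv
  obtain ⟨w⟩ := hreach
  exact ⟨w.length, mem_layer_of_walk G S T hST w huS⟩

noncomputable def rk (Bb : ℕ) (v : V) : ℕ :=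
  (T.filter fun w => en G S T v₀ Bb w < en G S T v₀ Bb v).card

noncomputable def code (Bb : ℕ) : Finset (ℕ × ℕ) :=
  (T.filter fun v => v ∉ S).image fun v =>
    (rk G S T v₀ Bb (parent G S T v₀ v), lab G (parent G S T v₀ v) v)

end Layers

noncomputable def rho (N : Finset ℕ) (m : ℕ) : ℕ := (N.filter fun x => x < m).card

lemma rho_lt_rho {N : Finset ℕ} {x y : ℕ} (hx : x ∈ N) (h : x < y) :
    rho N x < rho N y := by
  refine Finset.card_lt_card ((Finset.ssubset_iff_of_subset ?_).2
    ⟨x, Finset.mem_filter.2 ⟨hx, h⟩, by simp⟩)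
  intro a ha
  simp only [Finset.mem_filter] at ha ⊢
  exact ⟨ha.1, ha.2.trans h⟩

lemma rho_injOn {N : Finset ℕ} {x y : ℕ} (hx : x ∈ N) (hy : y ∈ N)
    (h : rho N x = rho N y) : x = y := by
  rcases lt_trichotomy x y with h'|h'|h'
  · exact absurd h (Nat.ne_of_lt (rho_lt_rho hx h'))
  · exact h'
  · exact absurd h.symm (Nat.ne_of_lt (rho_lt_rho hy h'))

lemma rho_eq_range (N : Finset ℕ) (m : ℕ) :
    rho N m = ((Finset.range m).filter fun x => x ∈ N).card := by
  rw [rho]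
  congr 1
  ext x
  simp [Finset.mem_filter, Finset.mem_range, and_comm]

section Main

variable (G : SimpleGraph V) (S T : Finset V) (v₀ : V) (Bb : ℕ)
variable (hST : S ⊆ T) (hBb : 2 ≤ Bb) (hBr : S.card < Bb)
  (hlab : ∀ u w : V, G.Adj u w → lab G u w + 1 < Bb)
  (hexall : ∀ v ∈ T, ∃ k, v ∈ layer G S T k)

include hST hBb hBr hlab hexall

lemma en_inj {v w : V} (hv : v ∈ T) (hw : w ∈ T)
    (h : en G S T v₀ Bb v = en G S T v₀ Bb w) : v = w := by
  have h1 := dec_en G S T v₀ hST hBb hBr hlab (depth G S T v) v hv (hexall v hv) rfl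
  have h2 := dec_en G S T v₀ hST hBb hBr hlab (depth G S T w) w hw (hexall w hw) rfl
  rw [← h1, ← h2, h]

lemma rk_eq_rho {v : V} (hv : v ∈ T) :
    rk G S T v₀ Bb v = rho (T.image (en G S T v₀ Bb)) (en G S T v₀ Bb v) := by
  rw [rk, rho, Finset.filter_image]
  rw [Finset.card_image_of_injOn]
  intro a ha b hb hab
  exact en_inj G S T v₀ Bb hST hBb hBr hlab hexall
    (Finset.filter_subset _ _ ha) (Finset.filter_subset _ _ hb) hab

lemma rk_lt_card {v : V} (hv : v ∈ T) : rk G S T v₀ Bb v < T.card := by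
  refine Finset.card_lt_card ((Finset.ssubset_iff_of_subset (Finset.filter_subset _ _)).2
    ⟨v, hv, ?_⟩)
  simp

lemma mem_image_en_small {nn : ℕ} (hnn : nn < Bb) :
    nn ∈ T.image (en G S T v₀ Bb) ↔ 1 ≤ nn ∧ nn ≤ S.card := by
  constructor
  · intro h
    obtain ⟨v, hv, rfl⟩ := Finset.mem_image.1 h
    have hd : depth G S T v = 0 := by
      by_contra hd
      exact absurd (Bb_le_en G S T v₀ (Bb := Bb) hv (hexall v hv) hd) (by omega)
    have hvS := mem_S_of_depth_eq_zero G S T (hexall v hv) hd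
    have hidx : S.toList.idxOf v < S.toList.length :=
      List.idxOf_lt_length_iff.2 (Finset.mem_toList.2 hvS)
    rw [en_root G S T v₀ hd]
    rw [Finset.length_toList] at hidx
    omega
  · rintro ⟨h1, h2⟩
    have hlt : nn - 1 < S.toList.length := by rw [Finset.length_toList]; omega
    set v := S.toList.get ⟨nn - 1, hlt⟩ with hvdef
    have hvS : v ∈ S := Finset.mem_toList.1 (List.get_mem _ ⟨nn - 1, hlt⟩)
    refine Finset.mem_image.2 ⟨v, hST hvS, ?_⟩
    rw [en_root G S T v₀ (depth_eq_zero_of_mem G S T hvS)]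
    have : S.toList.idxOf v = nn - 1 := by
      have := (Finset.nodup_toList S).idxOf_getElem (nn - 1) hlt
      simpa [hvdef, List.get_eq_getElem] using this
    omega

lemma mem_image_en_big {nn : ℕ} (hnn : Bb ≤ nn) :
    nn ∈ T.image (en G S T v₀ Bb) ↔
      (nn % Bb ≠ 0 ∧ nn / Bb ∈ T.image (en G S T v₀ Bb) ∧
        (rho (T.image (en G S T v₀ Bb)) (nn / Bb), nn % Bb - 1) ∈ code G S T v₀ Bb) := by
  constructor
  · intro h
    obtain ⟨v, hv, rfl⟩ := Finset.mem_image.1 h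
    have hd : depth G S T v ≠ 0 := by
      intro hd
      have hvS := mem_S_of_depth_eq_zero G S T (hexall v hv) hd
      have hidx : S.toList.idxOf v < S.toList.length :=
        List.idxOf_lt_length_iff.2 (Finset.mem_toList.2 hvS)
      rw [Finset.length_toList] at hidx
      rw [en_root G S T v₀ hd] at hnn
      omega
    obtain ⟨hpl, hadj⟩ := parent_spec G S T v₀ hv (hexall v hv) hd
    have hpT : parent G S T v₀ v ∈ T := layer_subset hST _ hpl
    have hstep := en_step G S T v₀ (Bb := Bb) hv (hexall v hv) hd
    set p := parent G S T v₀ v with hp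
    set c := lab G p v + 1 with hc
    have hclt : c < Bb := hlab _ _ hadj
    have hform : en G S T v₀ Bb v = Bb * en G S T v₀ Bb p + c := by rw [hstep]; ring
    have hdiv : en G S T v₀ Bb v / Bb = en G S T v₀ Bb p := by
      rw [hform, Nat.mul_add_div (by omega), Nat.div_eq_of_lt hclt, Nat.add_zero]
    have hmod : en G S T v₀ Bb v % Bb = c := by
      rw [hform, Nat.mul_add_mod, Nat.mod_eq_of_lt hclt]
    refine ⟨by omega, ?_, ?_⟩
    · rw [hdiv]; exact Finset.mem_image_of_mem _ hpT
    · rw [hdiv, hmod]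
      refine Finset.mem_image.2 ⟨v, ?_, ?_⟩
      · refine Finset.mem_filter.2 ⟨hv, fun hvS => hd (depth_eq_zero_of_mem G S T hvS)⟩
      · rw [← hp, ← rk_eq_rho G S T v₀ Bb hST hBb hBr hlab hexall hpT, hc]
        simp
  · rintro ⟨hmod, hdivmem, hpair⟩
    obtain ⟨u, hu, huen⟩ := Finset.mem_image.1 hdivmem
    obtain ⟨w, hwmem, hweq⟩ := Finset.mem_image.1 hpair
    have hwT : w ∈ T := (Finset.mem_filter.1 hwmem).1
    have hwS : w ∉ S := (Finset.mem_filter.1 hwmem).2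
    have hdw : depth G S T w ≠ 0 := fun h =>
      hwS (mem_S_of_depth_eq_zero G S T (hexall w hwT) h)
    obtain ⟨hpl, hadj⟩ := parent_spec G S T v₀ hwT (hexall w hwT) hdw
    have hpT : parent G S T v₀ w ∈ T := layer_subset hST _ hpl
    have heq1 : rk G S T v₀ Bb (parent G S T v₀ w) = rho (T.image (en G S T v₀ Bb)) (nn / Bb) :=
      (Prod.ext_iff.1 hweq).1
    have heq2 : lab G (parent G S T v₀ w) w = nn % Bb - 1 := (Prod.ext_iff.1 hweq).2
    rw [rk_eq_rho G S T v₀ Bb hST hBb hBr hlab hexall hpT] at heq1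
    have hen_eq : en G S T v₀ Bb (parent G S T v₀ w) = nn / Bb := by
      refine rho_injOn (Finset.mem_image_of_mem _ hpT) ?_ heq1
      rw [← huen]; exact Finset.mem_image_of_mem _ hu
    have hstep := en_step G S T v₀ (Bb := Bb) hwT (hexall w hwT) hdw
    have hmodlt : nn % Bb < Bb := Nat.mod_lt _ (by omega)
    have : en G S T v₀ Bb w = nn := by
      rw [hstep, hen_eq, heq2]
      have h1 : nn % Bb - 1 + 1 = nn % Bb := by omega
      rw [h1]
      exact Nat.div_add_mod' nn Bb
    rw [← this]
    exact Finset.mem_image_of_mem _ hwT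


lemma card_code : (code G S T v₀ Bb).card = (T.filter fun v => v ∉ S).card := by
  rw [code]
  apply Finset.card_image_of_injOn
  intro a ha b hb hab
  rw [Finset.mem_coe, Finset.mem_filter] at ha hb
  have hda : depth G S T a ≠ 0 := fun h => ha.2 (mem_S_of_depth_eq_zero G S T (hexall a ha.1) h)
  have hdb : depth G S T b ≠ 0 := fun h => hb.2 (mem_S_of_depth_eq_zero G S T (hexall b hb.1) h)
  obtain ⟨hpla, hadja⟩ := parent_spec G S T v₀ ha.1 (hexall a ha.1) hda
  obtain ⟨hplb, hadjb⟩ := parent_spec G S T v₀ hb.1 (hexall b hb.1) hdb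
  have hpTa : parent G S T v₀ a ∈ T := layer_subset hST _ hpla
  have hpTb : parent G S T v₀ b ∈ T := layer_subset hST _ hplb
  have h1 : rk G S T v₀ Bb (parent G S T v₀ a) = rk G S T v₀ Bb (parent G S T v₀ b) :=
    (Prod.ext_iff.1 hab).1
  have h2 : lab G (parent G S T v₀ a) a = lab G (parent G S T v₀ b) b :=
    (Prod.ext_iff.1 hab).2
  rw [rk_eq_rho G S T v₀ Bb hST hBb hBr hlab hexall hpTa,
    rk_eq_rho G S T v₀ Bb hST hBb hBr hlab hexall hpTb] at h1
  have hen : en G S T v₀ Bb (parent G S T v₀ a) = en G S T v₀ Bb (parent G S T v₀ b) :=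
    rho_injOn (Finset.mem_image_of_mem _ hpTa) (Finset.mem_image_of_mem _ hpTb) h1
  have hpp : parent G S T v₀ a = parent G S T v₀ b :=
    en_inj G S T v₀ Bb hST hBb hBr hlab hexall hpTa hpTb hen
  have := ninv_lab v₀ hadja
  rw [h2, hpp, ninv_lab v₀ hadjb] at this
  exact this.symm

lemma image_dec : (T.image (en G S T v₀ Bb)).image (dec G S v₀ Bb) = T := by
  rw [Finset.image_image]
  have h : T.image (dec G S v₀ Bb ∘ en G S T v₀ Bb) = T.image id := by
    apply Finset.image_congr
    intro v hv
    exact dec_en G S T v₀ hST hBb hBr hlab _ v hv (hexall v (Finset.mem_coe.1 hv)) rfl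
  rw [h, Finset.image_id]

end Main

lemma eq_of_code_eq (G : SimpleGraph V) (S : Finset V) (v₀ : V) (Bb : ℕ)
    (hBb : 2 ≤ Bb) (hBr : S.card < Bb)
    (hlab : ∀ u w : V, G.Adj u w → lab G u w + 1 < Bb)
    (T₁ T₂ : Finset V) (hST₁ : S ⊆ T₁) (hST₂ : S ⊆ T₂)
    (hex₁ : ∀ v ∈ T₁, ∃ k, v ∈ layer G S T₁ k)
    (hex₂ : ∀ v ∈ T₂, ∃ k, v ∈ layer G S T₂ k)
    (hcode : code G S T₁ v₀ Bb = code G S T₂ v₀ Bb) : T₁ = T₂ := by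
  have key : ∀ nn : ℕ,
      (nn ∈ T₁.image (en G S T₁ v₀ Bb)) ↔ nn ∈ T₂.image (en G S T₂ v₀ Bb) := by
    intro nn
    induction nn using Nat.strong_induction_on with
    | _ nn ih =>
      rcases lt_or_ge nn Bb with h|h
      · rw [mem_image_en_small G S T₁ v₀ Bb hST₁ hBb hBr hlab hex₁ h,
          mem_image_en_small G S T₂ v₀ Bb hST₂ hBb hBr hlab hex₂ h]
      · have hdivlt : nn / Bb < nn := Nat.div_lt_self (by omega) (by omega)
        have hN : (nn / Bb ∈ T₁.image (en G S T₁ v₀ Bb)) ↔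
            nn / Bb ∈ T₂.image (en G S T₂ v₀ Bb) := ih _ hdivlt
        have hrho : rho (T₁.image (en G S T₁ v₀ Bb)) (nn / Bb)
            = rho (T₂.image (en G S T₂ v₀ Bb)) (nn / Bb) := by
          rw [rho_eq_range, rho_eq_range]
          congr 1
          apply Finset.filter_congr
          intro x hx
          simp only [Finset.mem_range] at hx
          exact ih x (hx.trans_le hdivlt.le)
        rw [mem_image_en_big G S T₁ v₀ Bb hST₁ hBb hBr hlab hex₁ h,
          mem_image_en_big G S T₂ v₀ Bb hST₂ hBb hBr hlab hex₂ h, hrho, hcode, hN]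
  have hNeq : T₁.image (en G S T₁ v₀ Bb) = T₂.image (en G S T₂ v₀ Bb) := Finset.ext key
  have h1 := image_dec G S T₁ v₀ Bb hST₁ hBb hBr hlab hex₁
  have h2 := image_dec G S T₂ v₀ Bb hST₂ hBb hBr hlab hex₂
  rw [← h1, ← h2, hNeq]


lemma aux1 (s : ℕ) : ∀ m k : ℕ, m ≤ k → k ≤ s - 1 →
    (s : ℝ) ^ m * (k.factorial : ℝ) ≤ (s : ℝ) ^ k * (m.factorial : ℝ) := by
  intro m k hmk
  induction k, hmk using Nat.le_induction with
  | base => intro _; exact le_rfl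
  | succ k hmk ih =>
    intro hks
    have hks' : k ≤ s - 1 := by omega
    have h1 := ih hks'
    have hs : (k : ℝ) + 1 ≤ (s : ℝ) := by
      have : k + 1 ≤ s := by omega
      exact_mod_cast this
    calc (s:ℝ) ^ m * ((k+1).factorial : ℝ)
        = ((k:ℝ)+1) * ((s:ℝ) ^ m * (k.factorial : ℝ)) := by
          rw [Nat.factorial_succ]; push_cast; ring
      _ ≤ ((k:ℝ)+1) * ((s:ℝ) ^ k * (m.factorial : ℝ)) := by
          apply mul_le_mul_of_nonneg_left h1; positivity
      _ ≤ (s:ℝ) * ((s:ℝ) ^ k * (m.factorial : ℝ)) := by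
          apply mul_le_mul_of_nonneg_right hs; positivity
      _ = (s:ℝ) ^ (k+1) * (m.factorial : ℝ) := by ring

lemma aux2 : ∀ s : ℕ, 1 ≤ s →
    (s : ℝ) ^ (s - 1) ≤ Real.exp 1 ^ (s - 1) * ((s-1).factorial : ℝ) := by
  intro s hs
  induction s, hs using Nat.le_induction with
  | base => simp
  | succ s hs ih =>
    have hs0 : (0:ℝ) < (s:ℝ) := by exact_mod_cast hs
    have hstep : ((s:ℝ) + 1) ^ s ≤ Real.exp 1 * (s:ℝ) ^ s := by
      have h1 : (1 : ℝ)/s + 1 ≤ Real.exp (1/s) := Real.add_one_le_exp _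
      have h2 : (s:ℝ) + 1 ≤ (s:ℝ) * Real.exp (1/s) := by
        have := mul_le_mul_of_nonneg_left h1 hs0.le
        calc (s:ℝ) + 1 = (s:ℝ) * ((1:ℝ)/s + 1) := by field_simp; ring
          _ ≤ (s:ℝ) * Real.exp (1/s) := this
      have h3 : ((s:ℝ) + 1) ^ s ≤ ((s:ℝ) * Real.exp (1/s)) ^ s := by
        apply pow_le_pow_left₀ (by positivity) h2
      have h4 : ((s:ℝ) * Real.exp (1/s)) ^ s = (s:ℝ)^s * Real.exp 1 := by
        rw [mul_pow, ← Real.exp_nat_mul]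
        congr 2
        field_simp
      rw [h4] at h3
      linarith
    have hsm : s - 1 + 1 = s := by omega
    have hpow : (s:ℝ) ^ s = (s:ℝ) * (s:ℝ) ^ (s-1) := by
      conv_lhs => rw [← hsm]
      rw [pow_succ]
      push_cast [hsm]
      ring
    have hfact : (s.factorial : ℝ) = (s:ℝ) * ((s-1).factorial : ℝ) := by
      conv_lhs => rw [← hsm]
      rw [Nat.factorial_succ]
      push_cast [hsm]
      ring
    calc ((s+1:ℕ):ℝ) ^ (s + 1 - 1) = ((s:ℝ)+1) ^ s := by push_cast; norm_num
      _ ≤ Real.exp 1 * (s:ℝ) ^ s := hstep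
      _ = Real.exp 1 * ((s:ℝ) * (s:ℝ)^(s-1)) := by rw [hpow]
      _ ≤ Real.exp 1 * ((s:ℝ) * (Real.exp 1 ^ (s-1) * ((s-1).factorial : ℝ))) := by
          apply mul_le_mul_of_nonneg_left _ (Real.exp_pos 1).le
          exact mul_le_mul_of_nonneg_left ih hs0.le
      _ = Real.exp 1 ^ (s - 1 + 1) * ((s:ℝ) * ((s-1).factorial : ℝ)) := by
          rw [pow_succ]; ring
      _ = Real.exp 1 ^ (s + 1 - 1) * ((s.factorial : ℝ)) := by
          rw [hfact, hsm]; norm_num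

lemma pow_div_factorial_le {s m : ℕ} (hs : 1 ≤ s) (hm : m ≤ s - 1) :
    (s : ℝ) ^ m / (m.factorial : ℝ) ≤ Real.exp 1 ^ (s - 1) := by
  have hfm : (0:ℝ) < (m.factorial : ℝ) := by exact_mod_cast m.factorial_pos
  have hfs : (0:ℝ) < ((s-1).factorial : ℝ) := by exact_mod_cast (s-1).factorial_pos
  rw [div_le_iff₀ hfm]
  have h1 := aux1 s m (s-1) hm le_rfl
  have h2 := aux2 s hs
  -- s^m * (s-1)! ≤ s^(s-1) * m! ≤ e^(s-1) * (s-1)! * m!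
  have h3 : (s:ℝ)^m * ((s-1).factorial : ℝ) ≤ Real.exp 1 ^ (s-1) * ((s-1).factorial : ℝ) * (m.factorial : ℝ) := by
    calc (s:ℝ)^m * ((s-1).factorial : ℝ) ≤ (s:ℝ)^(s-1) * (m.factorial : ℝ) := h1
      _ ≤ Real.exp 1 ^ (s-1) * ((s-1).factorial : ℝ) * (m.factorial : ℝ) := by
          apply mul_le_mul_of_nonneg_right h2; positivity
  have h4 : (s:ℝ)^m * ((s-1).factorial:ℝ)
      ≤ Real.exp 1 ^ (s-1) * (m.factorial:ℝ) * ((s-1).factorial:ℝ) := by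
    calc (s:ℝ)^m * ((s-1).factorial:ℝ) ≤ _ := h3
      _ = Real.exp 1 ^ (s-1) * (m.factorial:ℝ) * ((s-1).factorial:ℝ) := by ring
  have h5 : (s:ℝ)^m * ((s-1).factorial:ℝ)
      = (s:ℝ)^m * ((s-1).factorial:ℝ) := rfl
  nlinarith [hfs, hfm]

lemma arith {z r s : ℕ} (hz : 1 ≤ z) (hr : 1 ≤ r) (hrs : r ≤ s) :
    (((s * z).choose (s - r) : ℕ) : ℝ)
      ≤ Real.exp 1 ^ (r - 1) * ((z : ℝ) * Real.exp 1) ^ (s - r) := by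
  have hs : 1 ≤ s := hr.trans hrs
  have hm : s - r ≤ s - 1 := by omega
  have h1 : (((s * z).choose (s - r) : ℕ) : ℝ)
      ≤ ((s*z : ℕ) : ℝ) ^ (s - r) / ((s-r).factorial : ℝ) := Nat.choose_le_pow_div _ _
  have h2 : ((s*z : ℕ) : ℝ) ^ (s - r) / ((s-r).factorial : ℝ)
      = (z:ℝ)^(s-r) * ((s:ℝ)^(s-r) / ((s-r).factorial : ℝ)) := by
    push_cast
    rw [mul_pow]
    ring
  have h3 := pow_div_factorial_le (m := s - r) hs hm
  have h4 : (((s * z).choose (s - r) : ℕ) : ℝ) ≤ (z:ℝ)^(s-r) * Real.exp 1 ^ (s-1) := by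
    rw [h2] at h1
    refine h1.trans ?_
    apply mul_le_mul_of_nonneg_left h3 (by positivity)
  have h5 : Real.exp 1 ^ (r - 1) * ((z : ℝ) * Real.exp 1) ^ (s - r)
      = (z:ℝ)^(s-r) * Real.exp 1 ^ (s-1) := by
    rw [mul_pow, ← mul_assoc, mul_comm (Real.exp 1 ^ (r-1)), mul_assoc, ← pow_add]
    congr 2
    omega
  rw [h5]
  exact h4

end GottesmanCluster

open GottesmanCluster in
theorem stmt_0 {V : Type*} [Fintype V] [DecidableEq V]
    (G : SimpleGraph V) (z : ℕ) (hz : 1 ≤ z)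
    (hdeg : ∀ v : V, (G.neighborSet v).ncard ≤ z)
    (S : Finset V) (hS : S.Nonempty) (s : ℕ) (hs : S.card ≤ s) :
    (({T : Finset V | T.card = s ∧ S ⊆ T ∧
        ∀ v, ∀ hv : v ∈ T, ∃ u, ∃ hu : u ∈ T, u ∈ S ∧
          (G.induce (T : Set V)).Reachable
            ⟨v, Finset.mem_coe.mpr hv⟩ ⟨u, Finset.mem_coe.mpr hu⟩} : Set (Finset V)).ncard : ℝ)
      ≤ Real.exp 1 ^ (S.card - 1) * ((z : ℝ) * Real.exp 1) ^ (s - S.card) := by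
  classical
  obtain ⟨v₀, hv₀⟩ := hS
  have hr : 1 ≤ S.card := Finset.card_pos.2 ⟨v₀, hv₀⟩
  set F : Set (Finset V) := {T : Finset V | T.card = s ∧ S ⊆ T ∧
        ∀ v, ∀ hv : v ∈ T, ∃ u, ∃ hu : u ∈ T, u ∈ S ∧
          (G.induce (T : Set V)).Reachable
            ⟨v, Finset.mem_coe.mpr hv⟩ ⟨u, Finset.mem_coe.mpr hu⟩} with hF
  set Bb := max z S.card + 1 with hBbdef
  have hBb : 2 ≤ Bb := by
    have := Nat.le_max_left z S.card; omega
  have hBr : S.card < Bb := by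
    have := Nat.le_max_right z S.card; omega
  have hlab : ∀ u w : V, G.Adj u w → lab G u w + 1 < Bb := by
    intro u w h
    have h1 : lab G u w < z := lab_lt h (hdeg u)
    have := Nat.le_max_left z S.card
    omega
  have hFfin : F.Finite := Set.toFinite _
  rw [Set.ncard_eq_toFinset_card _ hFfin]
  have hcard : (hFfin.toFinset).card
      ≤ (((Finset.range s) ×ˢ (Finset.range z)).powersetCard (s - S.card)).card := by
    apply Finset.card_le_card_of_injOn (fun T => code G S T v₀ Bb)
    · intro T hT
      rw [Finset.mem_coe, Set.Finite.mem_toFinset, hF] at hT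
      obtain ⟨hcardT, hSsub, hconn⟩ := hT
      have hexall : ∀ v ∈ T, ∃ k, v ∈ layer G S T k :=
        exists_layer_of_conn G S T hSsub hconn
      refine Finset.mem_powersetCard.2 ⟨?_, ?_⟩
      · intro pr hpr
        obtain ⟨v, hvmem, rfl⟩ := Finset.mem_image.1 hpr
        have hvT : v ∈ T := (Finset.mem_filter.1 hvmem).1
        have hvS : v ∉ S := (Finset.mem_filter.1 hvmem).2
        have hd : depth G S T v ≠ 0 := fun h =>
          hvS (mem_S_of_depth_eq_zero G S T (hexall v hvT) h)
        obtain ⟨hpl, hadj⟩ := parent_spec G S T v₀ hvT (hexall v hvT) hd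
        have hpT : parent G S T v₀ v ∈ T := layer_subset hSsub _ hpl
        refine Finset.mem_product.2 ⟨?_, ?_⟩
        · rw [Finset.mem_range]
          have := rk_lt_card G S T v₀ Bb hSsub hBb hBr hlab hexall hpT
          omega
        · rw [Finset.mem_range]
          exact lab_lt hadj (hdeg _)
      · rw [card_code G S T v₀ Bb hSsub hBb hBr hlab hexall]
        have : T.filter (fun v => v ∉ S) = T \ S := by
          ext x; simp [Finset.mem_sdiff]
        rw [this, Finset.card_sdiff_of_subset hSsub, hcardT]
    · intro T₁ h₁ T₂ h₂ hcode
      simp only [Finset.mem_coe, Set.Finite.mem_toFinset, hF, Set.mem_setOf_eq] at h₁ h₂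
      obtain ⟨hc₁, hS₁, hconn₁⟩ := h₁
      obtain ⟨hc₂, hS₂, hconn₂⟩ := h₂
      exact eq_of_code_eq G S v₀ Bb hBb hBr hlab T₁ T₂ hS₁ hS₂
        (exists_layer_of_conn G S T₁ hS₁ hconn₁)
        (exists_layer_of_conn G S T₂ hS₂ hconn₂) hcode
  have hpc : (((Finset.range s) ×ˢ (Finset.range z)).powersetCard (s - S.card)).card
      = (s * z).choose (s - S.card) := by
    rw [Finset.card_powersetCard, Finset.card_product, Finset.card_range, Finset.card_range]
  rw [hpc] at hcard
  calc ((hFfin.toFinset.card : ℕ) : ℝ) ≤ (((s * z).choose (s - S.card) : ℕ) : ℝ) := by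
        exact_mod_cast hcard
    _ ≤ Real.exp 1 ^ (S.card - 1) * ((z : ℝ) * Real.exp 1) ^ (s - S.card) :=
        arith hz hr hs
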